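/- One has χ_n · M_1^{μ̃_n} = (−1)^n · χ_n^T, where χ_n^T is the transpose of χ_n; equivalently, since χ_n is invertible, M_1^{μ̃_n} = (−1)^n · χ_n^{−1} · χ_n^T. -/

import Mathlib

open Finset Matrix Polynomial FreeAbelianGroup

/-- `d k = a 1 * a 2 * ⋯ * a k`, with `d 0 = 1`. -/
def chainD (a : ℕ → ℕ) (k : ℕ) : ℕ := ∏ i ∈ Finset.Icc 1 k, a i

/-- `μ̃ 0 = 1`, `μ̃ k = d k - μ̃ (k-1)`. -/
def chainMu (a : ℕ → ℕ) : ℕ → ℤ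
  | 0 => 1
  | k + 1 => (chainD a (k + 1) : ℤ) - chainMu a k

/-- `φ_n(t) = ∏_{i=0}^{n} (1 - t^{d_i})^{(-1)^{n-i}}` as a rational function over `ℚ`. -/
noncomputable def chainPhi (a : ℕ → ℕ) (n : ℕ) : RatFunc ℚ :=
  ∏ i ∈ Finset.range (n + 1),
    ((1 : RatFunc ℚ) - RatFunc.X ^ (chainD a i)) ^ ((-1 : ℤ) ^ (n - i))

/-- the regular nilpotent `μ × μ` matrix -/
def nilpN (μ : ℕ) : Matrix (Fin μ) (Fin μ) ℚ :=
  Matrix.of fun i j => if (j : ℕ) = (i : ℕ) + 1 then 1 else 0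

/-- `χ = ∑_{i=0}^{μ-1} c_i N^i` -/
noncomputable def chiMat (μ : ℕ) (c : ℕ → ℚ) : Matrix (Fin μ) (Fin μ) ℚ :=
  ∑ i ∈ Finset.range μ, c i • (nilpN μ) ^ i

/-- the companion-type matrix `M₁`: `(M₁)_{i,1} = -c'_i`, `(M₁)_{i,i+1} = 1` (1-based). -/
def M1mat (μ : ℕ) (c' : ℕ → ℚ) : Matrix (Fin μ) (Fin μ) ℚ :=
  Matrix.of fun i j =>
    (if (j : ℕ) = 0 then -c' ((i : ℕ) + 1) else 0) +
    (if (j : ℕ) = (i : ℕ) + 1 then 1 else 0)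

lemma sum_shift_aux (f : ℕ → ℚ) (t μ : ℕ) :
    ∑ l ∈ Finset.range μ, (if t ≤ l then f (l - t) else 0) = ∑ s ∈ Finset.range (μ - t), f s := by
  have h1 : ∑ l ∈ Finset.range μ, (if t ≤ l then f (l - t) else 0)
      = ∑ l ∈ Finset.Ico t μ, f (l - t) := by
    rw [Finset.range_eq_Ico,
      ← Finset.sum_subset (Finset.Ico_subset_Ico_left (Nat.zero_le t) : Finset.Ico t μ ⊆ Finset.Ico 0 μ)]
    · exact Finset.sum_congr rfl fun l hl => if_pos (Finset.mem_Ico.mp hl).1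
    · intro l hl hl2
      simp only [Finset.mem_Ico] at hl hl2
      rw [if_neg]; omega
  rw [h1, Finset.sum_Ico_eq_sum_range]
  exact Finset.sum_congr rfl fun s _ => by rw [Nat.add_sub_cancel_left]

lemma sum_cutoff_aux (f : ℕ → ℚ) (w i μ : ℕ) (hi : i < μ) :
    ∑ l ∈ Finset.range μ, (if l + w ≤ i then f l else 0) = ∑ l ∈ Finset.range (i + 1 - w), f l := by
  rw [← Finset.sum_subset (Finset.range_subset_range.mpr (by omega) : Finset.range (i+1-w) ⊆ Finset.range μ)]
  · exact Finset.sum_congr rfl fun l hl => if_pos (by simp at hl; omega)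
  · intro l hl hl2
    simp only [Finset.mem_range] at hl hl2
    rw [if_neg]; omega

lemma nilpN_pow_apply (μ m : ℕ) (i j : Fin μ) :
    ((nilpN μ) ^ m) i j = if (j : ℕ) = (i : ℕ) + m then 1 else 0 := by
  induction m generalizing i j with
  | zero =>
    simp [Matrix.one_apply, Fin.ext_iff, eq_comm]
  | succ m ih =>
    rw [pow_succ, Matrix.mul_apply]
    by_cases h : (j : ℕ) = (i : ℕ) + m + 1
    · have hl : (i : ℕ) + m < μ := by omega
      rw [Finset.sum_eq_single (⟨(i : ℕ) + m, hl⟩ : Fin μ)]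
      · rw [ih, if_pos rfl, nilpN]
        simp only [Matrix.of_apply]
        rw [if_pos (by simpa using h), one_mul, if_pos (by omega)]
      · intro b _ hb
        rw [ih, if_neg (by simpa [Fin.ext_iff] using fun hh => hb (by simp [Fin.ext_iff, hh])), zero_mul]
      · intro hb; exact absurd (Finset.mem_univ _) hb
    · rw [if_neg (by omega), Finset.sum_eq_zero]
      intro l _
      rw [ih, nilpN]
      simp only [Matrix.of_apply]
      by_cases h1 : (l : ℕ) = (i : ℕ) + m
      · rw [if_neg (show ¬(j : ℕ) = (l : ℕ) + 1 by omega), mul_zero]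
      · rw [if_neg h1, zero_mul]

lemma chiMat_apply (μ : ℕ) (c : ℕ → ℚ) (i j : Fin μ) :
    chiMat μ c i j = if (i : ℕ) ≤ (j : ℕ) then c ((j : ℕ) - i) else 0 := by
  rw [chiMat]
  simp only [Matrix.sum_apply, Matrix.smul_apply, nilpN_pow_apply, smul_eq_mul]
  by_cases h : (i : ℕ) ≤ (j : ℕ)
  · rw [if_pos h, Finset.sum_eq_single ((j : ℕ) - i)]
    · rw [if_pos (by omega), mul_one]
    · intro b _ hb; rw [if_neg (by omega), mul_zero]
    · intro hb; simp only [Finset.mem_range] at hb; omega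
  · rw [if_neg h, Finset.sum_eq_zero]
    intro m _; rw [if_neg (by omega), mul_zero]

noncomputable def geomP (d m : ℕ) : Polynomial ℚ := ∑ j ∈ Finset.range m, Polynomial.X ^ (j * d)

lemma geomP_coeff (d m : ℕ) (hd : 1 ≤ d) (hm : 1 ≤ m) (i : ℕ) :
    (geomP d m).coeff i = if d ∣ i ∧ i ≤ (m - 1) * d then 1 else 0 := by
  rw [geomP, Polynomial.finset_sum_coeff]
  simp only [Polynomial.coeff_X_pow]
  by_cases h : d ∣ i ∧ i ≤ (m - 1) * d
  · obtain ⟨⟨e, he⟩, h2⟩ := h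
    have hed : e * d ≤ (m - 1) * d := by rw [mul_comm, ← he]; exact h2
    have hem : e < m := by
      by_contra hc
      push_neg at hc
      have h3 : m * d ≤ e * d := Nat.mul_le_mul_right d hc
      have h4 : (m - 1) * d + d = m * d := by
        cases m with
        | zero => omega
        | succ mm => simp [Nat.succ_sub_one, Nat.succ_mul]
      omega
    rw [Finset.sum_eq_single e]
    · rw [if_pos (by rw [he]; ring), if_pos ⟨⟨e, he⟩, h2⟩]
    · intro b _ hb
      rw [if_neg]
      intro hh
      exact hb (Nat.eq_of_mul_eq_mul_right (show 0 < d by omega) (by rw [← hh, he]; ring))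
    · intro hb; exact absurd (Finset.mem_range.mpr hem) hb
  · rw [if_neg h, Finset.sum_eq_zero]
    intro j hj
    simp only [Finset.mem_range] at hj
    rw [if_neg]
    intro he
    refine h ⟨⟨j, by rw [he]; ring⟩, ?_⟩
    rw [he]
    exact Nat.mul_le_mul_right d (by omega)

lemma geomP_ne_zero (d m : ℕ) (hd : 1 ≤ d) (hm : 1 ≤ m) : geomP d m ≠ 0 := by
  intro h
  have := geomP_coeff d m hd hm 0
  rw [h] at this
  simp at this

lemma geomP_natDegree (d m : ℕ) (hd : 1 ≤ d) (hm : 1 ≤ m) :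
    (geomP d m).natDegree = (m - 1) * d := by
  apply le_antisymm
  · apply Polynomial.natDegree_sum_le_of_forall_le
    intro j hj
    simp only [Finset.mem_range] at hj
    calc (Polynomial.X ^ (j * d) : Polynomial ℚ).natDegree ≤ j * d :=
          le_of_eq (Polynomial.natDegree_X_pow _)
      _ ≤ (m - 1) * d := Nat.mul_le_mul_right d (by omega)
  · apply Polynomial.le_natDegree_of_ne_zero
    rw [geomP_coeff d m hd hm]
    rw [if_pos ⟨dvd_mul_left d (m-1), le_rfl⟩]
    norm_num

lemma geomP_reflect (d m : ℕ) (hd : 1 ≤ d) (hm : 1 ≤ m) :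
    Polynomial.reflect ((m - 1) * d) (geomP d m) = geomP d m := by
  ext i
  rw [Polynomial.coeff_reflect]
  by_cases h : i ≤ (m - 1) * d
  · rw [Polynomial.revAt_le h, geomP_coeff d m hd hm, geomP_coeff d m hd hm]
    have hdN : d ∣ (m - 1) * d := dvd_mul_left d (m-1)
    by_cases h1 : d ∣ i
    · rw [if_pos ⟨(Nat.dvd_sub hdN h1), by omega⟩, if_pos ⟨h1, h⟩]
    · rw [if_neg, if_neg (by tauto)]
      rintro ⟨hdvd, -⟩
      exact h1 (by
        have := Nat.dvd_sub hdN hdvd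
        rwa [Nat.sub_sub_self h] at this)
  · rw [Polynomial.revAt_eq_self_of_lt (by omega)]

lemma geomP_coeff_zero (d m : ℕ) (hd : 1 ≤ d) (hm : 1 ≤ m) : (geomP d m).coeff 0 = 1 := by
  rw [geomP_coeff d m hd hm, if_pos ⟨Dvd.intro 0 rfl, Nat.zero_le _⟩]

lemma geomP_mul (d m : ℕ) :
    (1 - Polynomial.X ^ d) * geomP d m = 1 - Polynomial.X ^ (m * d) := by
  have := geom_sum_mul (Polynomial.X ^ d : Polynomial ℚ) m
  have h2 : geomP d m = ∑ i ∈ Finset.range m, (Polynomial.X ^ d : Polynomial ℚ) ^ i := by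
    rw [geomP]
    exact Finset.sum_congr rfl fun j _ => by rw [← pow_mul, mul_comm]
  rw [h2]
  have h3 : ((Polynomial.X : Polynomial ℚ) ^ d) ^ m = Polynomial.X ^ (m * d) := by
    rw [← pow_mul, mul_comm]
  calc (1 - Polynomial.X ^ d) * ∑ i ∈ Finset.range m, (Polynomial.X ^ d : Polynomial ℚ) ^ i
      = -((∑ i ∈ Finset.range m, (Polynomial.X ^ d : Polynomial ℚ) ^ i) * (Polynomial.X ^ d - 1)) := by ring
    _ = 1 - Polynomial.X ^ (m * d) := by rw [this, h3]; ring

lemma chainD_zero (a : ℕ → ℕ) : chainD a 0 = 1 := by simp [chainD]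

lemma chainD_succ (a : ℕ → ℕ) (k : ℕ) : chainD a (k + 1) = chainD a k * a (k + 1) := by
  rw [chainD, chainD, Finset.prod_Icc_succ_top (by omega)]

lemma chainD_pos (a : ℕ → ℕ) {n : ℕ} (ha : ∀ i, 1 ≤ i → i ≤ n → 2 ≤ a i) {k : ℕ} (hk : k ≤ n) :
    1 ≤ chainD a k := by
  induction k with
  | zero => simp [chainD_zero]
  | succ k ih =>
    rw [chainD_succ]
    have h1 := ih (by omega)
    have h2 := ha (k + 1) (by omega) hk
    nlinarith

lemma chainMu_bounds (a : ℕ → ℕ) {n : ℕ} (ha : ∀ i, 1 ≤ i → i ≤ n → 2 ≤ a i) {k : ℕ} (hk : k ≤ n) :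
    1 ≤ chainMu a k ∧ chainMu a k ≤ (chainD a k : ℤ) := by
  induction k with
  | zero => simp [chainMu, chainD_zero]
  | succ k ih =>
    obtain ⟨h1, h2⟩ := ih (by omega)
    have hd : 1 ≤ chainD a k := chainD_pos a ha (by omega)
    have hak : 2 ≤ a (k + 1) := ha (k + 1) (by omega) hk
    have hdd : (chainD a (k+1) : ℤ) = (chainD a k : ℤ) * (a (k+1) : ℤ) := by
      rw [chainD_succ]; push_cast; ring
    constructor
    · show (1 : ℤ) ≤ (chainD a (k + 1) : ℤ) - chainMu a k
      have : (chainD a k : ℤ) * 2 ≤ (chainD a k : ℤ) * (a (k+1) : ℤ) := by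
        apply mul_le_mul_of_nonneg_left (by exact_mod_cast hak) (by positivity)
      omega
    · show (chainD a (k + 1) : ℤ) - chainMu a k ≤ (chainD a (k+1) : ℤ)
      omega

noncomputable def qaux (a : ℕ → ℕ) : ℕ → Polynomial ℚ
  | 0 => 1 - Polynomial.X
  | 1 => geomP (chainD a 0) (a 1)
  | (k+2) => qaux a k * geomP (chainD a (k+1)) (a (k+2))

lemma qaux_mul (a : ℕ → ℕ) (k : ℕ) : qaux a (k + 1) * qaux a k = 1 - Polynomial.X ^ (chainD a (k + 1)) := by
  induction k with
  | zero =>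
    show geomP (chainD a 0) (a 1) * (1 - Polynomial.X) = _
    rw [mul_comm, chainD_zero]
    have := geomP_mul 1 (a 1)
    rw [pow_one] at this
    rw [this, chainD_succ, chainD_zero, one_mul, mul_one]
  | succ k ih =>
    show qaux a k * geomP (chainD a (k+1)) (a (k+2)) * qaux a (k+1) = _
    calc qaux a k * geomP (chainD a (k+1)) (a (k+2)) * qaux a (k+1)
        = (qaux a (k+1) * qaux a k) * geomP (chainD a (k+1)) (a (k+2)) := by ring
      _ = (1 - Polynomial.X ^ (chainD a (k+1))) * geomP (chainD a (k+1)) (a (k+2)) := by rw [ih]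
      _ = 1 - Polynomial.X ^ (a (k+2) * chainD a (k+1)) := geomP_mul _ _
      _ = 1 - Polynomial.X ^ (chainD a (k+2)) := by rw [chainD_succ a (k+1), mul_comm]

lemma ratfunc_one_sub_X_pow_ne_zero {d : ℕ} (hd : 1 ≤ d) :
    (1 : RatFunc ℚ) - RatFunc.X ^ d ≠ 0 := by
  have h : ((1 : RatFunc ℚ) - RatFunc.X ^ d)
      = algebraMap (Polynomial ℚ) (RatFunc ℚ) (1 - Polynomial.X ^ d) := by
    rw [map_sub, _root_.map_one, map_pow, RatFunc.algebraMap_X]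
  rw [h]
  intro hc
  have h0 : (1 - Polynomial.X ^ d : Polynomial ℚ) = 0 := by
    apply RatFunc.algebraMap_injective ℚ
    rw [hc, map_zero]
  have := congrArg (fun q => Polynomial.coeff q d) h0
  simp only [Polynomial.coeff_sub, Polynomial.coeff_X_pow, Polynomial.coeff_one,
    Polynomial.coeff_zero, if_pos rfl] at this
  rw [if_neg (by omega)] at this
  norm_num at this
lemma poly_one_sub_X_pow_ne_zero {d : ℕ} (hd : 1 ≤ d) :
    (1 - Polynomial.X ^ d : Polynomial ℚ) ≠ 0 := by
  intro h0
  have := congrArg (fun q => Polynomial.coeff q d) h0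
  simp only [Polynomial.coeff_sub, Polynomial.coeff_X_pow, Polynomial.coeff_one,
    Polynomial.coeff_zero, if_pos rfl] at this
  rw [if_neg (by omega)] at this
  norm_num at this

lemma chainPhi_ne_zero (a : ℕ → ℕ) {n : ℕ} (ha : ∀ i, 1 ≤ i → i ≤ n → 2 ≤ a i) {k : ℕ} (hk : k ≤ n) : chainPhi a k ≠ 0 := by
  rw [chainPhi]
  apply Finset.prod_ne_zero_iff.mpr
  intro i hi
  simp only [Finset.mem_range] at hi
  exact zpow_ne_zero _ (ratfunc_one_sub_X_pow_ne_zero (chainD_pos a ha (by omega)))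

lemma chainPhi_succ_mul (a : ℕ → ℕ) {n : ℕ} (ha : ∀ i, 1 ≤ i → i ≤ n → 2 ≤ a i) {k : ℕ} (hk : k + 1 ≤ n) :
    chainPhi a (k + 1) * chainPhi a k
      = algebraMap (Polynomial ℚ) (RatFunc ℚ) (1 - Polynomial.X ^ (chainD a (k + 1))) := by
  have hmap : algebraMap (Polynomial ℚ) (RatFunc ℚ) (1 - Polynomial.X ^ (chainD a (k + 1)))
      = 1 - RatFunc.X ^ (chainD a (k + 1)) := by
    rw [map_sub, _root_.map_one, map_pow, RatFunc.algebraMap_X]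
  rw [hmap]
  have hsplit : chainPhi a (k + 1)
      = (1 - RatFunc.X ^ (chainD a (k + 1))) * (chainPhi a k)⁻¹ := by
    rw [chainPhi, Finset.prod_range_succ, Nat.sub_self, pow_zero, zpow_one, mul_comm]
    congr 1
    have : ∀ i ∈ Finset.range (k + 1),
        ((1 : RatFunc ℚ) - RatFunc.X ^ (chainD a i)) ^ ((-1 : ℤ) ^ (k + 1 - i))
        = (((1 : RatFunc ℚ) - RatFunc.X ^ (chainD a i)) ^ ((-1 : ℤ) ^ (k - i)))⁻¹ := by
      intro i hi
      simp only [Finset.mem_range] at hi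
      rw [show k + 1 - i = (k - i) + 1 by omega, pow_succ, mul_neg_one, _root_.zpow_neg]
    rw [Finset.prod_congr rfl this, Finset.prod_inv_distrib]
    rfl
  rw [hsplit, mul_assoc, inv_mul_cancel₀ (chainPhi_ne_zero a ha (by omega)), mul_one]

lemma qaux_eq_phi (a : ℕ → ℕ) {n : ℕ} (ha : ∀ i, 1 ≤ i → i ≤ n → 2 ≤ a i) {k : ℕ} (hk : k ≤ n) :
    algebraMap (Polynomial ℚ) (RatFunc ℚ) (qaux a k) = chainPhi a k := by
  induction k with
  | zero =>
    show algebraMap (Polynomial ℚ) (RatFunc ℚ) (1 - Polynomial.X) = _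
    rw [chainPhi, Finset.range_one, Finset.prod_singleton, Nat.sub_self, pow_zero, zpow_one,
      chainD_zero, pow_one, map_sub, _root_.map_one, RatFunc.algebraMap_X]
  | succ k ih =>
    have ihk := ih (by omega)
    have hq := congrArg (algebraMap (Polynomial ℚ) (RatFunc ℚ)) (qaux_mul a k)
    rw [_root_.map_mul, ihk] at hq
    exact mul_right_cancel₀ (chainPhi_ne_zero a ha (by omega))
      (hq.trans (chainPhi_succ_mul a ha hk).symm)
theorem qaux_props (a : ℕ → ℕ) {n : ℕ} (ha : ∀ i, 1 ≤ i → i ≤ n → 2 ≤ a i) :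
    ∀ k, k ≤ n → qaux a k ≠ 0 ∧ (qaux a k).natDegree = (chainMu a k).toNat ∧
      Polynomial.reflect (chainMu a k).toNat (qaux a k) = ((-1:ℚ)^(k+1)) • qaux a k ∧
      (qaux a k).coeff 0 = 1 := by
  intro k
  induction k using Nat.strong_induction_on with
  | _ k ih =>
    match k with
    | 0 =>
      intro _
      have hq : qaux a 0 = 1 - Polynomial.X := rfl
      have hμ : (chainMu a 0).toNat = 1 := rfl
      have h1 : (1 - Polynomial.X : Polynomial ℚ) = -(Polynomial.X - Polynomial.C 1) := by
        rw [Polynomial.C_1]; ring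
      refine ⟨?_, ?_, ?_, ?_⟩
      · rw [hq, h1]
        simp only [neg_ne_zero]
        exact Polynomial.X_sub_C_ne_zero 1
      · rw [hq, hμ, h1, Polynomial.natDegree_neg, Polynomial.natDegree_X_sub_C]
      · rw [hq, hμ]
        ext i
        rw [Polynomial.coeff_reflect, Polynomial.coeff_smul, smul_eq_mul]
        match i with
        | 0 => simp [Polynomial.revAt_le, Polynomial.coeff_one, Polynomial.coeff_X]
        | 1 => simp [Polynomial.revAt_le, Polynomial.coeff_one, Polynomial.coeff_X]
        | (j+2) =>
          rw [Polynomial.revAt_eq_self_of_lt (by omega)]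
          simp [Polynomial.coeff_one, Polynomial.coeff_X]
      · rw [hq]; simp
    | 1 =>
      intro hk1
      have hq : qaux a 1 = geomP (chainD a 0) (a 1) := rfl
      have hd : 1 ≤ chainD a 0 := by rw [chainD_zero]
      have hm : 1 ≤ a 1 := by have := ha 1 le_rfl hk1; omega
      have hμ : (chainMu a 1).toNat = (a 1 - 1) * chainD a 0 := by
        have h1 : chainMu a 1 = (chainD a 1 : ℤ) - 1 := rfl
        have h2 : chainD a 1 = a 1 := by rw [chainD_succ, chainD_zero, one_mul]
        rw [chainD_zero, mul_one, h1, h2]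
        omega
      refine ⟨?_, ?_, ?_, ?_⟩
      · rw [hq]; exact geomP_ne_zero _ _ hd hm
      · rw [hq, hμ, geomP_natDegree _ _ hd hm]
      · rw [hq, hμ, geomP_reflect _ _ hd hm]
        have : ((-1:ℚ))^(1+1) = 1 := by norm_num
        rw [this, one_smul]
      · rw [hq]; exact geomP_coeff_zero _ _ hd hm
    | (k+2) =>
      intro hk2
      obtain ⟨ih0, ih1, ih2, ih3⟩ := ih k (by omega) (by omega)
      have hq : qaux a (k+2) = qaux a k * geomP (chainD a (k+1)) (a (k+2)) := rfl
      have hd : 1 ≤ chainD a (k+1) := chainD_pos a ha (by omega)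
      have hm : 2 ≤ a (k+2) := ha (k+2) (by omega) hk2
      have hG0 : geomP (chainD a (k+1)) (a (k+2)) ≠ 0 := geomP_ne_zero _ _ hd (by omega)
      have hμ : (chainMu a (k+2)).toNat
          = (chainMu a k).toNat + (a (k+2) - 1) * chainD a (k+1) := by
        have e1 : chainMu a (k+2)
            = chainMu a k + ((a (k+2) : ℤ) - 1) * (chainD a (k+1) : ℤ) := by
          show (chainD a (k+2) : ℤ) - ((chainD a (k+1) : ℤ) - chainMu a k) = _
          rw [chainD_succ a (k+1)]
          push_cast
          ring
        have e2 : ((a (k+2) - 1) * chainD a (k+1) : ℕ) = ((a (k+2) : ℤ) - 1) * (chainD a (k+1) : ℤ) := by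
          push_cast [Nat.cast_sub (by omega : 1 ≤ a (k+2))]
          ring
        have hb1 := (chainMu_bounds a ha (by omega : k ≤ n)).1
        have hb2 := (chainMu_bounds a ha (by omega : k + 2 ≤ n)).1
        omega
      refine ⟨?_, ?_, ?_, ?_⟩
      · rw [hq]; exact mul_ne_zero ih0 hG0
      · rw [hq, Polynomial.natDegree_mul ih0 hG0, ih1, geomP_natDegree _ _ hd (by omega), hμ]
      · have hGnd : (geomP (chainD a (k+1)) (a (k+2))).natDegree
            ≤ (a (k+2) - 1) * chainD a (k+1) :=
          (geomP_natDegree (chainD a (k+1)) (a (k+2)) hd (by omega)).le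
        have hrm := Polynomial.reflect_mul (qaux a k) (geomP (chainD a (k+1)) (a (k+2)))
          ih1.le hGnd
        rw [hq, hμ, hrm, ih2, geomP_reflect _ _ hd (by omega), Algebra.smul_mul_assoc]
        congr 1
        have : ((-1:ℚ))^(k+2+1) = (-1)^(k+1) * (-1)^2 := by ring
        rw [this]
        norm_num
      · rw [hq, Polynomial.mul_coeff_zero, ih3, geomP_coeff_zero _ _ hd (by omega), mul_one]
lemma matrix_main (μ : ℕ) (c c' : ℕ → ℚ) (n : ℕ)
    (hc0 : c 0 = 1)
    (hconv : ∀ r, ∑ s ∈ Finset.range (r+1), c s * c' (r - s) = if r = 0 then 1 else 0)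
    (hrev : ∀ l ≤ μ, c' l = -(-1:ℚ)^n * c' (μ - l)) :
    ∀ k, k ≤ μ → chiMat μ c * (M1mat μ c') ^ k = Matrix.of (fun i j : Fin μ =>
      (if (i : ℕ) + k ≤ (j : ℕ) then c ((j : ℕ) - i - k) else 0) +
      (-1:ℚ)^n * (if (j : ℕ) + (μ - k) ≤ (i : ℕ) then c ((i : ℕ) - j - (μ - k)) else 0)) := by
  set δ : ℚ := (-1:ℚ)^n with hδdef
  have hδ2 : δ * δ = 1 := by
    rw [hδdef, ← pow_add]
    exact (neg_one_pow_eq_one_iff_even (by norm_num)).mpr ⟨n, by ring⟩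
  intro k hk
  induction k with
  | zero =>
    rw [pow_zero, mul_one]
    ext i j
    simp only [Matrix.of_apply, Nat.sub_zero, Nat.add_zero, chiMat_apply]
    rw [if_neg (show ¬ (j : ℕ) + μ ≤ (i : ℕ) by have := i.isLt; omega), mul_zero, add_zero]
  | succ k ih =>
    rw [pow_succ, ← mul_assoc, ih (by omega)]
    ext i j
    rw [Matrix.mul_apply]
    simp only [Matrix.of_apply, M1mat]
    have hsplit : ∀ l : Fin μ,
        ((if (i : ℕ) + k ≤ (l : ℕ) then c ((l : ℕ) - i - k) else 0) +
          δ * (if (l : ℕ) + (μ - k) ≤ (i : ℕ) then c ((i : ℕ) - l - (μ - k)) else 0)) *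
        ((if (j : ℕ) = 0 then -c' ((l : ℕ) + 1) else 0) +
          (if (j : ℕ) = (l : ℕ) + 1 then 1 else 0))
        = ((if (i : ℕ) + k ≤ (l : ℕ) then c ((l : ℕ) - i - k) else 0) +
          δ * (if (l : ℕ) + (μ - k) ≤ (i : ℕ) then c ((i : ℕ) - l - (μ - k)) else 0)) *
          (if (j : ℕ) = 0 then -c' ((l : ℕ) + 1) else 0) +
          ((if (i : ℕ) + k ≤ (l : ℕ) then c ((l : ℕ) - i - k) else 0) +
          δ * (if (l : ℕ) + (μ - k) ≤ (i : ℕ) then c ((i : ℕ) - l - (μ - k)) else 0)) *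
          (if (j : ℕ) = (l : ℕ) + 1 then 1 else 0) := fun l => by ring
    rw [Finset.sum_congr rfl (fun l _ => hsplit l), Finset.sum_add_distrib]
    by_cases hj : (j : ℕ) = 0
    · -- column 0 case
      have hsum2 : ∑ l : Fin μ, ((if (i : ℕ) + k ≤ (l : ℕ) then c ((l : ℕ) - i - k) else 0) +
          δ * (if (l : ℕ) + (μ - k) ≤ (i : ℕ) then c ((i : ℕ) - l - (μ - k)) else 0)) *
          (if (j : ℕ) = (l : ℕ) + 1 then 1 else 0) = 0 := by
        apply Finset.sum_eq_zero
        intro l _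
        rw [if_neg (show ¬(j : ℕ) = (l : ℕ) + 1 by omega), mul_zero]
      rw [hsum2, add_zero]
      simp only [if_pos hj]
      -- expand products
      have hterm : ∀ l : Fin μ,
          ((if (i : ℕ) + k ≤ (l : ℕ) then c ((l : ℕ) - i - k) else 0) +
            δ * (if (l : ℕ) + (μ - k) ≤ (i : ℕ) then c ((i : ℕ) - l - (μ - k)) else 0)) *
            (-c' ((l : ℕ) + 1))
          = -(if (i : ℕ) + k ≤ (l : ℕ) then c ((l : ℕ) - i - k) * c' ((l : ℕ) + 1) else 0)
            - δ * (if (l : ℕ) + (μ - k) ≤ (i : ℕ) then c ((i : ℕ) - l - (μ - k)) * c' ((l : ℕ) + 1) else 0) := by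
        intro l
        by_cases h1 : (i : ℕ) + k ≤ (l : ℕ) <;> by_cases h2 : (l : ℕ) + (μ - k) ≤ (i : ℕ) <;>
          simp [h1, h2] <;> ring
      rw [Finset.sum_congr rfl (fun l _ => hterm l), Finset.sum_sub_distrib]
      rw [Finset.sum_neg_distrib, ← Finset.mul_sum]
      rw [Fin.sum_univ_eq_sum_range
        (fun l => if (i : ℕ) + k ≤ l then c (l - (i : ℕ) - k) * c' (l + 1) else 0) μ]
      rw [Fin.sum_univ_eq_sum_range
        (fun l => if l + (μ - k) ≤ (i : ℕ) then c ((i : ℕ) - l - (μ - k)) * c' (l + 1) else 0) μ]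
      have hc'0 : c' 0 = 1 := by
        have h0 := hconv 0
        simp [hc0] at h0
        exact h0
      -- first sum
      have hSA : ∑ l ∈ Finset.range μ,
          (if (i : ℕ) + k ≤ l then c (l - (i : ℕ) - k) * c' (l + 1) else 0)
          = -δ * (if (i : ℕ) + k + 1 = μ then 1 else 0) := by
        have hcongr : ∀ l ∈ Finset.range μ,
            (if (i : ℕ) + k ≤ l then c (l - (i : ℕ) - k) * c' (l + 1) else 0)
            = (if (i : ℕ) + k ≤ l then
                (fun s => c s * (-δ * c' (μ - s - ((i : ℕ) + k) - 1))) (l - ((i : ℕ) + k)) else 0) := by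
          intro l hl
          simp only [Finset.mem_range] at hl
          by_cases h : (i : ℕ) + k ≤ l
          · rw [if_pos h, if_pos h]
            simp only
            rw [hrev (l + 1) (by omega),
              show l - (i : ℕ) - k = l - ((i : ℕ) + k) by omega,
              show μ - (l + 1) = μ - (l - ((i : ℕ) + k)) - ((i : ℕ) + k) - 1 by omega]
          · rw [if_neg h, if_neg h]
        rw [Finset.sum_congr rfl hcongr,
          sum_shift_aux (fun s => c s * (-δ * c' (μ - s - ((i : ℕ) + k) - 1))) ((i : ℕ) + k) μ]
        by_cases ht : (i : ℕ) + k < μ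
        · have hμ : μ - ((i : ℕ) + k) = (μ - ((i : ℕ) + k) - 1) + 1 := by omega
          rw [hμ]
          have hcongr2 : ∀ s ∈ Finset.range ((μ - ((i : ℕ) + k) - 1) + 1),
              c s * (-δ * c' (μ - s - ((i : ℕ) + k) - 1))
              = -δ * (c s * c' ((μ - ((i : ℕ) + k) - 1) - s)) := by
            intro s hs
            simp only [Finset.mem_range] at hs
            have : μ - s - ((i : ℕ) + k) - 1 = (μ - ((i : ℕ) + k) - 1) - s := by omega
            rw [this]; ring
          rw [Finset.sum_congr rfl hcongr2, ← Finset.mul_sum, hconv]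
          by_cases h1 : (i : ℕ) + k + 1 = μ
          · rw [if_pos (by omega), if_pos h1]
          · rw [if_neg (by omega), if_neg h1]
        · have h0 : μ - ((i : ℕ) + k) = 0 := by omega
          rw [h0, Finset.range_zero, Finset.sum_empty, if_neg (by omega), mul_zero]
      -- second sum
      have hSB : ∑ l ∈ Finset.range μ,
          (if l + (μ - k) ≤ (i : ℕ) then c ((i : ℕ) - l - (μ - k)) * c' (l + 1) else 0)
          = -(if μ - k ≤ (i : ℕ) then c ((i : ℕ) + 1 - (μ - k)) else 0) := by
        rw [sum_cutoff_aux _ _ _ _ i.isLt]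
        by_cases hr : μ - k ≤ (i : ℕ)
        · rw [if_pos hr]
          set r := (i : ℕ) + 1 - (μ - k) with hrdef
          have hr1 : 1 ≤ r := by omega
          have hcongr : ∀ l ∈ Finset.range r,
              c ((i : ℕ) - l - (μ - k)) * c' (l + 1)
              = (fun s => c s * c' (r - s)) (r - 1 - l) := by
            intro l hl
            simp only [Finset.mem_range] at hl
            have e1 : (i : ℕ) - l - (μ - k) = r - 1 - l := by omega
            have e2 : l + 1 = r - (r - 1 - l) := by omega
            rw [e1, e2]
          rw [Finset.sum_congr rfl hcongr,
            Finset.sum_range_reflect (fun s => c s * c' (r - s)) r]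
          have := hconv r
          rw [Finset.sum_range_succ, Nat.sub_self, hc'0, mul_one, if_neg (by omega)] at this
          linarith [this]
        · rw [if_neg hr, show (i : ℕ) + 1 - (μ - k) = 0 by omega, Finset.range_zero,
            Finset.sum_empty, neg_zero]
      rw [hSA, hSB]
      simp only [hj]
      rw [if_neg (show ¬ (i : ℕ) + (k + 1) ≤ 0 by omega)]
      by_cases h1 : μ - k ≤ (i : ℕ)
      · rw [if_pos h1, if_pos (show 0 + (μ - (k+1)) ≤ (i : ℕ) by omega),
          if_neg (show ¬ (i : ℕ) + k + 1 = μ by omega)]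
        have : (i : ℕ) + 1 - (μ - k) = (i : ℕ) - 0 - (μ - (k + 1)) := by omega
        rw [this]; ring
      · rw [if_neg h1]
        by_cases h2 : (i : ℕ) + k + 1 = μ
        · rw [if_pos h2, if_pos (show 0 + (μ - (k+1)) ≤ (i : ℕ) by omega),
            show (i : ℕ) - 0 - (μ - (k + 1)) = 0 by omega, hc0]
          ring
        · rw [if_neg h2, if_neg (show ¬ 0 + (μ - (k+1)) ≤ (i : ℕ) by omega)]
          ring
    · -- column ≥ 1 case
      have hsum1 : ∑ l : Fin μ, ((if (i : ℕ) + k ≤ (l : ℕ) then c ((l : ℕ) - i - k) else 0) +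
          δ * (if (l : ℕ) + (μ - k) ≤ (i : ℕ) then c ((i : ℕ) - l - (μ - k)) else 0)) *
          (if (j : ℕ) = 0 then -c' ((l : ℕ) + 1) else 0) = 0 := by
        apply Finset.sum_eq_zero
        intro l _
        rw [if_neg hj, mul_zero]
      rw [hsum1, zero_add]
      have hjlt : (j : ℕ) - 1 < μ := by have := j.isLt; omega
      rw [Finset.sum_eq_single (⟨(j : ℕ) - 1, hjlt⟩ : Fin μ)]
      · simp only [Fin.val_mk]
        rw [if_pos (show (j : ℕ) = (j : ℕ) - 1 + 1 by omega), mul_one]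
        have e1 : (if (i : ℕ) + k ≤ (j : ℕ) - 1 then c ((j : ℕ) - 1 - i - k) else 0)
            = (if (i : ℕ) + (k+1) ≤ (j : ℕ) then c ((j : ℕ) - i - (k+1)) else 0) := by
          by_cases h : (i : ℕ) + (k+1) ≤ (j : ℕ)
          · rw [if_pos (show (i : ℕ) + k ≤ (j : ℕ) - 1 by omega), if_pos h]; congr 1; omega
          · rw [if_neg (show ¬(i : ℕ) + k ≤ (j : ℕ) - 1 by omega), if_neg h]
        have e2 : (if (j : ℕ) - 1 + (μ - k) ≤ (i : ℕ) then c ((i : ℕ) - ((j : ℕ) - 1) - (μ - k)) else 0)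
            = (if (j : ℕ) + (μ - (k+1)) ≤ (i : ℕ) then c ((i : ℕ) - j - (μ - (k+1))) else 0) := by
          by_cases h : (j : ℕ) + (μ - (k+1)) ≤ (i : ℕ)
          · rw [if_pos (show (j : ℕ) - 1 + (μ - k) ≤ (i : ℕ) by omega), if_pos h]; congr 1; omega
          · rw [if_neg (show ¬((j : ℕ) - 1 + (μ - k) ≤ (i : ℕ)) by omega), if_neg h]
        rw [e1, e2]
      · intro b _ hb
        have hb' : (b : ℕ) ≠ (j : ℕ) - 1 := fun h => hb (Fin.ext h)
        rw [if_neg (show ¬(j : ℕ) = (b : ℕ) + 1 by omega), mul_zero]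
      · intro hb; exact absurd (Finset.mem_univ _) hb
lemma chi_mul_inv (μ : ℕ) (c c' : ℕ → ℚ)
    (hconv : ∀ r, ∑ s ∈ Finset.range (r+1), c s * c' (r - s) = if r = 0 then 1 else 0) :
    chiMat μ c * chiMat μ c' = 1 := by
  ext i j
  rw [Matrix.mul_apply]
  have hcongr : ∀ l : Fin μ, chiMat μ c i l * chiMat μ c' l j
      = (fun m => if (i : ℕ) ≤ m then
          (fun s => if s + (i : ℕ) ≤ (j : ℕ) then c s * c' ((j : ℕ) - (i : ℕ) - s) else 0)
            (m - (i : ℕ)) else 0) (l : ℕ) := by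
    intro l
    rw [chiMat_apply, chiMat_apply]
    simp only
    by_cases h1 : (i : ℕ) ≤ (l : ℕ)
    · rw [if_pos h1]
      by_cases h2 : (l : ℕ) ≤ (j : ℕ)
      · rw [if_pos h2, if_pos (show (l : ℕ) - (i : ℕ) + (i : ℕ) ≤ (j : ℕ) by omega),
          show (j : ℕ) - (i : ℕ) - ((l : ℕ) - (i : ℕ)) = (j : ℕ) - (l : ℕ) by omega, if_pos h1]
      · rw [if_neg h2, if_neg (show ¬((l : ℕ) - (i : ℕ) + (i : ℕ) ≤ (j : ℕ)) by omega), mul_zero,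
          if_pos h1]
    · rw [if_neg h1, if_neg h1, zero_mul]
  rw [Finset.sum_congr rfl (fun l _ => hcongr l),
    Fin.sum_univ_eq_sum_range (fun m => if (i : ℕ) ≤ m then
          (fun s => if s + (i : ℕ) ≤ (j : ℕ) then c s * c' ((j : ℕ) - (i : ℕ) - s) else 0)
            (m - (i : ℕ)) else 0) μ,
    sum_shift_aux (fun s => if s + (i : ℕ) ≤ (j : ℕ) then c s * c' ((j : ℕ) - (i : ℕ) - s) else 0)
      (i : ℕ) μ]
  rw [Matrix.one_apply]
  by_cases hij : (i : ℕ) ≤ (j : ℕ)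
  · have hsub : Finset.range ((j : ℕ) - (i : ℕ) + 1) ⊆ Finset.range (μ - (i : ℕ)) :=
      Finset.range_subset_range.mpr (by have := j.isLt; omega)
    rw [← Finset.sum_subset hsub (fun l hl hl2 => by
      simp only [Finset.mem_range] at hl hl2
      rw [if_neg (by omega)])]
    have : ∀ s ∈ Finset.range ((j : ℕ) - (i : ℕ) + 1),
        (if s + (i : ℕ) ≤ (j : ℕ) then c s * c' ((j : ℕ) - (i : ℕ) - s) else 0)
        = c s * c' ((j : ℕ) - (i : ℕ) - s) := by
      intro s hs
      simp only [Finset.mem_range] at hs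
      rw [if_pos (by omega)]
    rw [Finset.sum_congr rfl this, hconv]
    by_cases he : i = j
    · rw [if_pos (by omega), if_pos he]
    · rw [if_neg (by rw [Fin.ext_iff] at he; omega), if_neg he]
  · rw [Finset.sum_eq_zero (fun s hs => by rw [if_neg (by omega)]),
      if_neg (by rw [Fin.ext_iff]; omega)]

lemma matrix_all (μ : ℕ) (c c' : ℕ → ℚ) (n : ℕ)
    (hc0 : c 0 = 1)
    (hconv : ∀ r, ∑ s ∈ Finset.range (r+1), c s * c' (r - s) = if r = 0 then 1 else 0)
    (hrev : ∀ l ≤ μ, c' l = -(-1:ℚ)^n * c' (μ - l)) :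
    chiMat μ c * (M1mat μ c') ^ μ = ((-1:ℚ)^n) • (chiMat μ c)ᵀ ∧
    IsUnit (chiMat μ c) ∧
    (M1mat μ c') ^ μ = ((-1:ℚ)^n) • ((chiMat μ c)⁻¹ * (chiMat μ c)ᵀ) := by
  have h1 : chiMat μ c * (M1mat μ c') ^ μ = ((-1:ℚ)^n) • (chiMat μ c)ᵀ := by
    rw [matrix_main μ c c' n hc0 hconv hrev μ le_rfl]
    ext i j
    simp only [Matrix.of_apply, Matrix.smul_apply, Matrix.transpose_apply, chiMat_apply,
      smul_eq_mul, Nat.sub_self, Nat.add_zero, Nat.sub_zero]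
    rw [if_neg (show ¬((i : ℕ) + μ ≤ (j : ℕ)) by have := j.isLt; omega), zero_add]
  have h2 : chiMat μ c * chiMat μ c' = 1 := chi_mul_inv μ c c' hconv
  have hu : IsUnit (chiMat μ c) := ⟨⟨_, _, h2, mul_eq_one_comm.mp h2⟩, rfl⟩
  refine ⟨h1, hu, ?_⟩
  have hinv : (chiMat μ c)⁻¹ = chiMat μ c' := Matrix.inv_eq_right_inv h2
  have h2' : chiMat μ c' * chiMat μ c = 1 := mul_eq_one_comm.mp h2
  calc (M1mat μ c') ^ μ = (chiMat μ c' * chiMat μ c) * (M1mat μ c') ^ μ := by rw [h2', one_mul]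
    _ = chiMat μ c' * (chiMat μ c * (M1mat μ c') ^ μ) := by rw [mul_assoc]
    _ = chiMat μ c' * (((-1:ℚ)^n) • (chiMat μ c)ᵀ) := by rw [h1]
    _ = ((-1:ℚ)^n) • ((chiMat μ c)⁻¹ * (chiMat μ c)ᵀ) := by rw [Matrix.mul_smul, hinv]


/-- `χ_n · M₁^{μ̃_n} = (-1)^n · χ_nᵀ`; equivalently, `χ_n` being invertible,
`M₁^{μ̃_n} = (-1)^n · χ_n⁻¹ · χ_nᵀ`. -/
theorem stmt_2 (n : ℕ) (hn : 1 ≤ n) (a : ℕ → ℕ) (ha : ∀ i, 1 ≤ i → i ≤ n → 2 ≤ a i)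
    (p : Polynomial ℚ)
    (hp : algebraMap (Polynomial ℚ) (RatFunc ℚ) p = chainPhi a n)
    (c : ℕ → ℚ)
    (hc : ∀ i, c i = PowerSeries.coeff i ((p : PowerSeries ℚ)⁻¹)) :
    chiMat (chainMu a n).toNat c * (M1mat (chainMu a n).toNat (fun i => p.coeff i)) ^ (chainMu a n).toNat
        = ((-1 : ℚ) ^ n) • (chiMat (chainMu a n).toNat c)ᵀ ∧
    IsUnit (chiMat (chainMu a n).toNat c) ∧
    (M1mat (chainMu a n).toNat (fun i => p.coeff i)) ^ (chainMu a n).toNat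
        = ((-1 : ℚ) ^ n) • ((chiMat (chainMu a n).toNat c)⁻¹ * (chiMat (chainMu a n).toNat c)ᵀ) := by
  set μ : ℕ := (chainMu a n).toNat with hμdef
  have hpq : p = qaux a n :=
    RatFunc.algebraMap_injective ℚ (hp.trans (qaux_eq_phi a ha le_rfl).symm)
  obtain ⟨hp0, pdeg, prefl, pc0⟩ := qaux_props a ha n le_rfl
  rw [← hpq] at hp0 pdeg prefl pc0
  have hsq : ((-1 : ℚ)) ^ n * ((-1 : ℚ)) ^ n = 1 := by
    rw [← pow_add]
    exact Even.neg_one_pow ⟨n, by ring⟩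
  have hrev : ∀ l ≤ μ, p.coeff l = -(-1:ℚ)^n * p.coeff (μ - l) := by
    intro l hl
    have h1 : p.coeff (μ - l) = (-1:ℚ)^(n+1) * p.coeff l := by
      have := congrArg (fun q => Polynomial.coeff q l) prefl
      simp only [Polynomial.coeff_reflect, Polynomial.coeff_smul, smul_eq_mul] at this
      rw [Polynomial.revAt_le hl] at this
      exact this
    rw [h1, ← mul_assoc]
    have h2 : -(-1:ℚ)^n * (-1:ℚ)^(n+1) = 1 := by
      rw [pow_succ]
      calc -(-1:ℚ)^n * ((-1:ℚ)^n * -1) = (-1:ℚ)^n * (-1:ℚ)^n := by ring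
        _ = 1 := hsq
    rw [h2, one_mul]
  have hcc : PowerSeries.constantCoeff (p : PowerSeries ℚ) ≠ 0 := by
    rw [Polynomial.constantCoeff_coe, pc0]
    norm_num
  have hc0 : c 0 = 1 := by
    rw [hc 0]
    have : (PowerSeries.coeff 0) ((p : PowerSeries ℚ)⁻¹)
        = PowerSeries.constantCoeff ((p : PowerSeries ℚ)⁻¹) := by
      rw [PowerSeries.coeff_zero_eq_constantCoeff]
    rw [this, PowerSeries.constantCoeff_inv, Polynomial.constantCoeff_coe, pc0, inv_one]
  have hconv : ∀ r, ∑ s ∈ Finset.range (r+1), c s * p.coeff (r - s)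
      = if r = 0 then 1 else 0 := by
    intro r
    have h1 := congrArg (PowerSeries.coeff r)
      (PowerSeries.inv_mul_cancel (p : PowerSeries ℚ) hcc)
    rw [PowerSeries.coeff_mul, PowerSeries.coeff_one,
      Finset.Nat.sum_antidiagonal_eq_sum_range_succ_mk
        (fun ij => (PowerSeries.coeff ij.1) ((p : PowerSeries ℚ)⁻¹)
          * (PowerSeries.coeff ij.2) (p : PowerSeries ℚ)) r] at h1
    rw [← h1]
    apply Finset.sum_congr rfl
    intro s _
    rw [hc s, Polynomial.coeff_coe]
  exact matrix_all μ c (fun i => p.coeff i) n hc0 hconv hrev
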